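/- Let D be the shifted derangement sequence defined by D_0 = 0, D_1 = 1, and D_{n+2} = (n+2) * D_{n+1} + (n+2) * D_n. Then for every rational number t and every natural number n ≥ 1, 1 + the sum over k from 1 to n of (t^{k-1} / (k+1)!) * ((k+1) * D_{k-1} + (t-1) * D_{k+1}) equals (t^n / (n+1)!) * D_{n+1}. -/

import Mathlib

def shiftedDerangement : ℕ → ℕ
  | 0 => 0
  | 1 => 1
  | n + 2 => (n + 2) * shiftedDerangement (n + 1) + (n + 2) * shiftedDerangement n

theorem derangement_sury (t : ℚ) (n : ℕ) (hn : 1 ≤ n) :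
    1 + ∑ k ∈ Finset.Icc 1 n,
        (t ^ (k - 1) / ((k + 1).factorial : ℚ)) *
          ((k + 1) * (shiftedDerangement (k - 1) : ℚ) +
            (t - 1) * (shiftedDerangement (k + 1) : ℚ)) =
      (t ^ n / ((n + 1).factorial : ℚ)) * (shiftedDerangement (n + 1) : ℚ) := by
  induction n with
  | zero => omega
  | succ m ih =>
    rcases Nat.eq_or_lt_of_le hn with h | h
    · simp only [← h]
      norm_num [shiftedDerangement, Finset.Icc_self]
      ring
    · have hm : 1 ≤ m := by omega
      rw [Finset.sum_Icc_succ_top (by omega : 1 ≤ m + 1), ← add_assoc, ih hm]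
      have hrec : (shiftedDerangement (m + 2) : ℚ)
          = (m + 2) * shiftedDerangement (m + 1) + (m + 2) * shiftedDerangement m := by
        rw [show shiftedDerangement (m + 2) = (m + 2) * shiftedDerangement (m + 1) + (m + 2) * shiftedDerangement m from rfl]
        push_cast; ring
      have hfac : ((m + 2).factorial : ℚ) = (m + 2) * (m + 1).factorial := by
        rw [Nat.factorial_succ]; push_cast; ring
      have hf1 : ((m + 1).factorial : ℚ) ≠ 0 := by positivity
      have hf2 : ((m + 2).factorial : ℚ) ≠ 0 := by positivity
      simp only [show m + 1 - 1 = m from rfl, show m + 1 + 1 = m + 2 from rfl]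
      field_simp
      rw [hfac]
      linear_combination (norm := (push_cast; ring)) (-(t ^ m) * ((m + 1).factorial : ℚ)) * hrec
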